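/- Let k ≥ 3 be an odd integer, L ≥ 3 an integer, and define c(k) = ∏_{j=1}^{(k−1)/2} sin²(2πj/k). Let n be a positive integer with n > 2^{1/(L−1)} · c(k)^{−1/(L−1)} (equivalently n^{L−1} > 2/c(k)). Let a₁ < a₂ be positive integers with n^L < a₁, and suppose x, u, v are positive integers satisfying a₁x − n = u^k and a₂x − n = v^k. Then |u/v − (a₁/a₂)^{1/k}| ≤ a₂/(2v^k), where (a₁/a₂)^{1/k} denotes the positive real k-th root of a₁/a₂. -/

import Mathlib

/-- Let k ≥ 3 be odd, L ≥ 3, c(k) = ∏_{j=1}^{(k−1)/2} sin²(2πj/k), and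
let n be a positive integer with n > 2^{1/(L−1)}·c(k)^{−1/(L−1)}. If n^L < a₁ < a₂ and
x, u, v are positive integers with a₁x − n = u^k and a₂x − n = v^k, then
|u/v − (a₁/a₂)^{1/k}| ≤ a₂/(2v^k). -/
theorem stmt_10 (k L : ℕ) (hk : 3 ≤ k) (hodd : Odd k) (hL : 3 ≤ L)
    (n : ℕ) (hn : 0 < n)
    (hn2 : (2 : ℝ) ^ ((1 : ℝ) / ((L : ℝ) - 1)) *
      (∏ j ∈ Finset.Icc 1 ((k - 1) / 2),
        Real.sin (2 * Real.pi * (j : ℝ) / (k : ℝ)) ^ 2) ^ (-(1 : ℝ) / ((L : ℝ) - 1))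
      < (n : ℝ))
    (a₁ a₂ : ℕ) (ha : n ^ L < a₁) (h12 : a₁ < a₂)
    (x u v : ℕ) (hx : 0 < x) (hu : 0 < u) (hv : 0 < v)
    (h1 : (a₁ * x : ℤ) - n = (u : ℤ) ^ k)
    (h2 : (a₂ * x : ℤ) - n = (v : ℤ) ^ k) :
    |(u : ℝ) / (v : ℝ) - ((a₁ : ℝ) / (a₂ : ℝ)) ^ ((1 : ℝ) / (k : ℝ))| ≤
      (a₂ : ℝ) / (2 * (v : ℝ) ^ k) := by
  have hkR : (3:ℝ) ≤ (k:ℝ) := by exact_mod_cast hk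
  have hk0 : (k:ℝ) ≠ 0 := by linarith
  have ha1pos : 0 < a₁ := lt_of_le_of_lt (Nat.zero_le _) ha
  have ha2pos : 0 < a₂ := ha1pos.trans h12
  have hnL : n ^ 3 ≤ n ^ L := Nat.pow_le_pow_right hn hL

  -- real casts
  have hnR : (1:ℝ) ≤ (n:ℝ) := by exact_mod_cast hn
  have ha1R : (0:ℝ) < (a₁:ℝ) := by exact_mod_cast ha1pos
  have ha2R : (0:ℝ) < (a₂:ℝ) := by exact_mod_cast ha2pos
  have h12R : (a₁:ℝ) < (a₂:ℝ) := by exact_mod_cast h12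
  have h2nR : 2 * (n:ℝ) ≤ (a₁:ℝ) := by
    have hnL' : ((n:ℝ))^3 ≤ (n:ℝ)^L := by exact_mod_cast hnL
    have haR : ((n:ℝ))^L + 1 ≤ (a₁:ℝ) := by exact_mod_cast ha
    have hsq : 0 ≤ ((n:ℝ)-1)^2 := sq_nonneg _
    have hcube : (n:ℝ)^2 ≤ (n:ℝ)^3 := pow_le_pow_right₀ hnR (by norm_num)
    nlinarith [hsq, hcube, hnL', haR]
  -- the power values
  have hU : ((u:ℝ))^k = (a₁:ℝ) * x - n := by exact_mod_cast h1.symm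
  have hV : ((v:ℝ))^k = (a₂:ℝ) * x - n := by exact_mod_cast h2.symm
  have hVpos : (0:ℝ) < (v:ℝ)^k := by positivity
  have hUpos : (0:ℝ) < (u:ℝ)^k := by positivity
  have hV' : (0:ℝ) < (a₂:ℝ) * x - n := hV ▸ hVpos
  have hU' : (0:ℝ) < (a₁:ℝ) * x - n := hU ▸ hUpos
  set A : ℝ := (u:ℝ)/(v:ℝ) with hAdef
  set r : ℝ := (a₁:ℝ)/(a₂:ℝ) with hrdef
  set B : ℝ := r ^ ((1:ℝ)/(k:ℝ)) with hBdef
  have hr0 : 0 < r := div_pos ha1R ha2R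
  have hr1 : r ≤ 1 := by
    rw [hrdef, div_le_one ha2R]; linarith
  have hB0 : 0 < B := Real.rpow_pos_of_pos hr0 _
  have hBk : B ^ k = r := by
    rw [hBdef, ← Real.rpow_natCast (r ^ ((1:ℝ)/(k:ℝ))) k, ← Real.rpow_mul hr0.le]
    rw [one_div, inv_mul_cancel₀ hk0, Real.rpow_one]
  have hA0 : 0 ≤ A := by positivity
  have hAk : A ^ k = ((a₁:ℝ) * x - n) / ((a₂:ℝ) * x - n) := by
    rw [hAdef, div_pow, hU, hV]
  -- A ≤ B
  have hABk : A ^ k ≤ B ^ k := by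
    rw [hAk, hBk, hrdef, div_le_div_iff₀ hV' ha2R]
    nlinarith [hnR, h12R, hx]
  have hAB : A ≤ B := by
    refine le_of_pow_le_pow_left₀ (by omega) hB0.le hABk
  -- (B - A) * B^(k-1) ≤ B^k - A^k
  have hks : k - 1 + 1 = k := by omega
  have hpowle : A ^ (k-1) ≤ B ^ (k-1) := pow_le_pow_left₀ hA0 hAB _
  have hsplitB : B ^ k = B ^ (k-1) * B := by rw [← pow_succ, hks]
  have hsplitA : A ^ k = A ^ (k-1) * A := by rw [← pow_succ, hks]
  have step1 : (B - A) * B ^ (k-1) ≤ B ^ k - A ^ k := by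
    rw [hsplitA, hsplitB]
    have h1' : A * A ^ (k-1) ≤ A * B ^ (k-1) := mul_le_mul_of_nonneg_left hpowle hA0
    linarith [h1']
  -- B^k - A^k = n (a₂ - a₁) / (a₂ * v^k)
  have key : B ^ k - A ^ k = ((n:ℝ) * ((a₂:ℝ) - a₁)) / ((a₂:ℝ) * ((v:ℝ)^k)) := by
    rw [hBk, hAk, hrdef, hV]
    field_simp
    ring
  -- r ≤ B^(k-1)
  have hBk1 : B ^ (k-1) = r ^ (((k:ℝ)-1)/(k:ℝ)) := by
    rw [hBdef, ← Real.rpow_natCast (r ^ ((1:ℝ)/(k:ℝ))) (k-1), ← Real.rpow_mul hr0.le]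
    congr 1
    have : ((k-1:ℕ):ℝ) = (k:ℝ) - 1 := by
      have : 1 ≤ k := by omega
      push_cast [this]; ring
    rw [this]; ring
  have hrB : r ≤ B ^ (k-1) := by
    rw [hBk1]
    calc r = r ^ (1:ℝ) := (Real.rpow_one r).symm
    _ ≤ r ^ (((k:ℝ)-1)/(k:ℝ)) := by
        apply Real.rpow_le_rpow_of_exponent_ge hr0 hr1
        rw [div_le_one (by linarith)]; linarith
  -- assemble
  have hBAnn : 0 ≤ B - A := sub_nonneg.2 hAB
  have hfin : (B - A) * r ≤ ((n:ℝ) * ((a₂:ℝ) - a₁)) / ((a₂:ℝ) * ((v:ℝ)^k)) := by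
    calc (B - A) * r ≤ (B - A) * B ^ (k-1) := by
          exact mul_le_mul_of_nonneg_left hrB hBAnn
    _ ≤ B ^ k - A ^ k := step1
    _ = _ := key
  have habs : |A - B| = B - A := by
    rw [abs_sub_comm, abs_of_nonneg hBAnn]
  rw [habs, le_div_iff₀ (by positivity : (0:ℝ) < 2 * (v:ℝ)^k)]
  have hfin2 : (B - A) * r * ((a₂:ℝ) * ((v:ℝ)^k)) ≤ (n:ℝ) * ((a₂:ℝ) - a₁) :=
    (le_div_iff₀ (by positivity)).mp hfin
  have hr_mul : r * (a₂:ℝ) = (a₁:ℝ) := div_mul_cancel₀ _ ha2R.ne'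
  have e2 : (B - A) * ((v:ℝ)^k) * a₁ ≤ (n:ℝ) * ((a₂:ℝ) - a₁) := by
    calc (B - A) * ((v:ℝ)^k) * a₁ = (B - A) * r * ((a₂:ℝ) * ((v:ℝ)^k)) := by
          rw [← hr_mul]; ring
    _ ≤ _ := hfin2
  have e3 : (n:ℝ) * ((a₂:ℝ) - a₁) ≤ (a₁:ℝ) * a₂ / 2 := by
    have t1 : 2 * (n:ℝ) * ((a₂:ℝ) - a₁) ≤ (a₁:ℝ) * ((a₂:ℝ) - a₁) :=
      mul_le_mul_of_nonneg_right h2nR (sub_nonneg.2 h12R.le)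
    linarith [t1, mul_pos ha1R ha1R]
  have hmain : (B - A) * (2 * (v:ℝ)^k) * a₁ ≤ (a₂:ℝ) * a₁ := by linarith [e2, e3]
  exact le_of_mul_le_mul_right (by linarith) ha1R
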